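/- As n → ∞, f_{(0,0,0,1)}(n) ~ √(2n); that is, the limit as n → ∞ of f_{(0,0,0,1)}(n)/√(2n) equals 1. -/

import Mathlib

open Finset

/-- A family `F` of subsets of `Fin n` satisfies the `α`-intersection pattern modulo 2
(for `α = (α_1, …, α_k)`, here 0-indexed: `α i` governs intersections of `i+1` distinct sets)
if every subfamily of `i+1` distinct sets has intersection of size `≡ α_i (mod 2)`. -/
def SatisfiesPattern (n k : ℕ) (α : Fin k → ZMod 2) (F : Finset (Finset (Fin n))) : Prop :=
  ∀ i : Fin k, ∀ S : Finset (Finset (Fin n)), S ⊆ F → S.card = i.val + 1 →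
    ((S.inf id).card : ZMod 2) = α i

/-- `maxPattern k α n` is `f_α(n)`, the maximum size of a family of subsets of `[n]`
satisfying the `α`-intersection pattern modulo 2. -/
noncomputable def maxPattern (k : ℕ) (α : Fin k → ZMod 2) (n : ℕ) : ℕ :=
  sSup {m : ℕ | ∃ F : Finset (Finset (Fin n)), SatisfiesPattern n k α F ∧ F.card = m}


lemma indSum {γ : Type*} [DecidableEq γ] (s t : Finset γ) :
    (∑ x ∈ s, if x ∈ t then (1 : ZMod 2) else 0) = ((s ∩ t).card : ZMod 2) := by
  rw [← Finset.sum_filter, Finset.filter_mem_eq_inter]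
  simp

lemma upper (n : ℕ) (F : Finset (Finset (Fin n)))
    (hF : SatisfiesPattern n 4 ![0,0,0,1] F) :
    F.card.choose 2 ≤ n + F.card + 1 := by
  classical
  let z : {q // q ∈ F.powersetCard 2} →
      (Fin n → ZMod 2) × (({A // A ∈ F}) → ZMod 2) × ZMod 2 := fun q =>
    ⟨fun x => if x ∈ q.1.inf id then 1 else 0,
     fun A => if (A : Finset (Fin n)) ∈ q.1 then 1 else 0, 1⟩
  let φ : {q // q ∈ F.powersetCard 2} →
      ((Fin n → ZMod 2) × (({A // A ∈ F}) → ZMod 2) × ZMod 2) →ₗ[ZMod 2] ZMod 2 := fun q =>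
    { toFun := fun v => (∑ x ∈ q.1.inf id, v.1 x)
        + (∑ A : {A // A ∈ F}, (if (A : Finset (Fin n)) ∈ q.1 then (1:ZMod 2) else 0) * v.2.1 A)
        + v.2.2
      map_add' := by
        intro v w
        simp [Finset.sum_add_distrib, mul_add]
        ring
      map_smul' := by
        intro c v
        simp [Finset.mul_sum, mul_left_comm, mul_add, Finset.sum_add_distrib] }
  have key : ∀ p q : {q // q ∈ F.powersetCard 2}, φ q (z p) = if p = q then 1 else 0 := by
    intro p q
    obtain ⟨hpF, hp2⟩ := Finset.mem_powersetCard.mp p.2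
    obtain ⟨hqF, hq2⟩ := Finset.mem_powersetCard.mp q.2
    have expand : φ q (z p) = (∑ x ∈ q.1.inf id, if x ∈ p.1.inf id then (1:ZMod 2) else 0)
        + (∑ A : {A // A ∈ F}, (if (A : Finset (Fin n)) ∈ q.1 then (1:ZMod 2) else 0)
            * (if (A : Finset (Fin n)) ∈ p.1 then (1:ZMod 2) else 0))
        + 1 := rfl
    have h1 : (∑ x ∈ q.1.inf id, if x ∈ p.1.inf id then (1:ZMod 2) else 0)
        = (((p.1 ∪ q.1).inf id).card : ZMod 2) := by
      rw [indSum, Finset.inf_union, Finset.inf_eq_inter, Finset.inter_comm]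
    have h2 : (∑ A : {A // A ∈ F}, (if (A : Finset (Fin n)) ∈ q.1 then (1:ZMod 2) else 0)
            * (if (A : Finset (Fin n)) ∈ p.1 then (1:ZMod 2) else 0))
        = ((p.1 ∩ q.1).card : ZMod 2) := by
      rw [Finset.sum_coe_sort F (fun A =>
        (if A ∈ q.1 then (1:ZMod 2) else 0) * (if A ∈ p.1 then (1:ZMod 2) else 0))]
      have : ∀ A ∈ F, (if A ∈ q.1 then (1:ZMod 2) else 0) * (if A ∈ p.1 then (1:ZMod 2) else 0)
          = if A ∈ p.1 ∩ q.1 then (1:ZMod 2) else 0 := by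
        intro A _
        by_cases h1' : A ∈ q.1 <;> by_cases h2' : A ∈ p.1 <;> simp [h1', h2', Finset.mem_inter]
      rw [Finset.sum_congr rfl this, indSum, Finset.inter_eq_right.mpr
        (le_trans inter_subset_left hpF)]
    rw [expand, h1, h2]
    by_cases hpq : p = q
    · subst hpq
      rw [Finset.union_self, Finset.inter_self,
        hF ⟨1, by norm_num⟩ p.1 hpF (by simpa using hp2), hp2, if_pos rfl]
      decide
    · have hne : p.1 ≠ q.1 := fun h => hpq (Subtype.ext h)
      have hinter : (p.1 ∩ q.1).card ≤ 1 := by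
        by_contra h
        push_neg at h
        have hle : (p.1 ∩ q.1).card ≤ p.1.card := Finset.card_le_card inter_subset_left
        rw [hp2] at hle
        have h2' : (p.1 ∩ q.1).card = 2 := le_antisymm hle h
        have heq : p.1 ∩ q.1 = p.1 := Finset.eq_of_subset_of_card_le inter_subset_left (by omega)
        have hsub : p.1 ⊆ q.1 := by rw [← heq]; exact inter_subset_right
        exact hne (Finset.eq_of_subset_of_card_le hsub (by omega))
      have hcard : (p.1 ∪ q.1).card + (p.1 ∩ q.1).card = 4 := by
        rw [Finset.card_union_add_card_inter, hp2, hq2]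
      rw [if_neg hpq]
      interval_cases h : (p.1 ∩ q.1).card
      · have hu : (p.1 ∪ q.1).card = 4 := by omega
        rw [hF ⟨3, by norm_num⟩ (p.1 ∪ q.1) (Finset.union_subset hpF hqF) (by simpa using hu)]
        decide
      · have hu : (p.1 ∪ q.1).card = 3 := by omega
        rw [hF ⟨2, by norm_num⟩ (p.1 ∪ q.1) (Finset.union_subset hpF hqF) (by simpa using hu)]
        decide
  have li : LinearIndependent (ZMod 2) z := by
    rw [Fintype.linearIndependent_iff]
    intro g hg p
    have h := congrArg (φ p) hg
    rw [map_sum, map_zero] at h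
    simp only [map_smul, smul_eq_mul] at h
    rw [Finset.sum_congr rfl (fun q _ => by rw [key q p])] at h
    simpa [mul_ite, Finset.sum_ite_eq'] using h
  have hcard := li.fintype_card_le_finrank
  have hrank : Module.finrank (ZMod 2)
      ((Fin n → ZMod 2) × (({A // A ∈ F}) → ZMod 2) × ZMod 2) = n + (F.card + 1) := by
    rw [Module.finrank_prod, Module.finrank_prod, Module.finrank_pi, Module.finrank_pi,
      Module.finrank_self, Fintype.card_fin, Fintype.card_coe]
  rw [hrank] at hcard
  have hι : Fintype.card {q // q ∈ F.powersetCard 2} = F.card.choose 2 := by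
    rw [Fintype.card_coe, Finset.card_powersetCard]
  omega

lemma mem_inf_finset {β γ : Type*} [DecidableEq γ] [Fintype γ] (T : Finset β)
    (f : β → Finset γ) (x : γ) : x ∈ T.inf f ↔ ∀ a ∈ T, x ∈ f a := by
  classical
  induction T using Finset.induction_on with
  | empty => simp [Finset.top_eq_univ]
  | insert _ _ h ih => rw [Finset.inf_insert]; simp [ih]

lemma transfer {γ : Type*} [Fintype γ] [DecidableEq γ] (n : ℕ) (hn : 0 < n)
    (G : Finset (Finset γ)) (hW : (G.sup id).card ≤ n) :
    ∃ F : Finset (Finset (Fin n)), F.card = G.card ∧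
      ∀ S : Finset (Finset (Fin n)), S ⊆ F → S.Nonempty →
        ∃ T : Finset (Finset γ), T ⊆ G ∧ T.card = S.card ∧
          (S.inf id).card = (T.inf id).card := by
  classical
  set W := G.sup id with hWdef
  obtain ⟨e⟩ : Nonempty ({x // x ∈ W} ↪ Fin n) :=
    Function.Embedding.nonempty_iff_card_le.mpr (by simpa [Fintype.card_coe] using hW)
  set φ : γ → Fin n := fun x => if h : x ∈ W then e ⟨x, h⟩ else ⟨0, hn⟩ with hφ
  have hinj : ∀ x ∈ W, ∀ y ∈ W, φ x = φ y → x = y := by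
    intro x hx y hy hxy
    rw [hφ] at hxy
    simp only [dif_pos hx, dif_pos hy] at hxy
    exact Subtype.mk_eq_mk.mp (e.injective hxy)
  have hGW : ∀ A ∈ G, A ⊆ W := fun A hA => Finset.le_sup (f := id) hA
  have him_card : ∀ A : Finset γ, A ⊆ W → (A.image φ).card = A.card := fun A hA =>
    Finset.card_image_of_injOn (fun x hx y hy => hinj x (hA hx) y (hA hy))
  have him_inter : ∀ A B : Finset γ, A ⊆ W → B ⊆ W →
      (A ∩ B).image φ = A.image φ ∩ B.image φ := by
    intro A B hA hB
    ext y
    simp only [Finset.mem_image, Finset.mem_inter]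
    constructor
    · rintro ⟨x, ⟨h1, h2⟩, rfl⟩
      exact ⟨⟨x, h1, rfl⟩, ⟨x, h2, rfl⟩⟩
    · rintro ⟨⟨x1, h1, rfl⟩, ⟨x2, h2, h12⟩⟩
      have hx : x2 = x1 := hinj x2 (hB h2) x1 (hA h1) h12
      exact ⟨x1, ⟨h1, hx ▸ h2⟩, rfl⟩
  have himG_inj : ∀ A ∈ G, ∀ B ∈ G, A.image φ = B.image φ → A = B := by
    have aux : ∀ A ∈ G, ∀ B ∈ G, A.image φ = B.image φ → A ⊆ B := by
      intro A hA B hB h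
      have h1 : (A ∩ B).image φ = A.image φ := by
        rw [him_inter A B (hGW A hA) (hGW B hB), h, Finset.inter_self]
      have h2 : (A ∩ B).card = A.card := by
        rw [← him_card _ (le_trans inter_subset_left (hGW A hA)), h1, him_card A (hGW A hA)]
      have := Finset.eq_of_subset_of_card_le inter_subset_left (le_of_eq h2.symm)
      rw [← this]
      exact inter_subset_right
    intro A hA B hB h
    exact Finset.Subset.antisymm (aux A hA B hB h) (aux B hB A hA h.symm)
  have claim : ∀ T : Finset (Finset γ), T.Nonempty → T ⊆ G →
      (T.image (fun A => A.image φ)).inf id = (T.inf id).image φ := by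
    intro T hT
    induction hT using Finset.Nonempty.cons_induction with
    | singleton a => intro _; simp
    | cons a s ha hs IH =>
      intro hsub
      have hsG : s ⊆ G := fun x hx => hsub (Finset.mem_cons_of_mem hx)
      have haG : a ∈ G := hsub (Finset.mem_cons_self a s)
      obtain ⟨b, hb⟩ := hs
      have hbW : s.inf id ⊆ W := le_trans (Finset.inf_le hb) (hGW b (hsG hb))
      rw [Finset.cons_eq_insert, Finset.image_insert, Finset.inf_insert, Finset.inf_insert,
        id, id, IH hsG, Finset.inf_eq_inter, Finset.inf_eq_inter,
        him_inter a (s.inf id) (hGW a haG) hbW]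
  refine ⟨G.image (fun A => A.image φ),
    Finset.card_image_of_injOn
      (by intro A hA B hB h; exact himG_inj A (by simpa using hA) B (by simpa using hB) h), ?_⟩
  intro S hS hSne
  obtain ⟨T, hTG, hTS⟩ := Finset.subset_image_iff.mp hS
  have hTcard : T.card = S.card := by
    rw [← hTS]
    refine (Finset.card_image_of_injOn ?_).symm
    intro A hA B hB h
    exact himG_inj A (hTG (by simpa using hA)) B (hTG (by simpa using hB)) h
  have hTne : T.Nonempty := by
    rw [← Finset.image_nonempty (f := fun A => A.image φ), hTS]
    exact hSne
  refine ⟨T, hTG, hTcard, ?_⟩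
  have key := claim T hTne hTG
  rw [hTS] at key
  rw [key]
  obtain ⟨b, hb⟩ := hTne
  exact him_card _ (le_trans (Finset.inf_le hb) (hGW b (hTG hb)))


lemma castEven (x : ℕ) : ((2 * x : ℕ) : ZMod 2) = 0 := by
  push_cast
  rw [show ((2 : ZMod 2)) = 0 by decide]
  ring

lemma castOdd (x : ℕ) : ((2 * x + 1 : ℕ) : ZMod 2) = 1 := by
  push_cast
  rw [show ((2 : ZMod 2)) = 0 by decide]
  ring

lemma choose2_eq (t : ℕ) : (2 * t).choose 2 = t * (2 * t - 1) := by
  rcases Nat.eq_zero_or_pos t with h | h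
  · simp [h]
  rw [Nat.choose_two_right]
  have h2 : 2 * t * (2 * t - 1) = 2 * (t * (2 * t - 1)) := by ring
  rw [h2, Nat.mul_div_cancel_left _ (by norm_num : 0 < 2)]

-- parities
lemma par1 (k : ℕ) : (((4 * k + 2).choose 2 + 1 : ℕ) : ZMod 2) = 0 := by
  have h : (4 * k + 2).choose 2 + 1 = 2 * (4 * k * k + 3 * k + 1) := by
    rw [show 4 * k + 2 = 2 * (2 * k + 1) by ring, choose2_eq]
    have : 2 * (2 * k + 1) - 1 = 4 * k + 1 := by omega
    rw [this]; ring
  rw [h, castEven]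

lemma par2 (k : ℕ) : (((4 * k + 1).choose 2 : ℕ) : ZMod 2) = 0 := by
  have h : (4 * k + 1).choose 2 = 2 * (k * (4 * k + 1)) := by
    rw [Nat.choose_two_right]
    have h1 : (4 * k + 1) * (4 * k + 1 - 1) = 2 * (2 * (k * (4 * k + 1))) := by
      rw [show 4 * k + 1 - 1 = 4 * k by omega]; ring
    rw [h1, Nat.mul_div_cancel_left _ (by norm_num : 0 < 2)]
  rw [h, castEven]

lemma par3 (k : ℕ) : (((4 * k).choose 2 : ℕ) : ZMod 2) = 0 := by
  rcases Nat.eq_zero_or_pos k with h | h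
  · simp [h]
  obtain ⟨j, rfl⟩ : ∃ j, k = j + 1 := ⟨k - 1, by omega⟩
  have h1 : (4 * (j + 1)).choose 2 = 2 * ((j + 1) * (4 * j + 3)) := by
    rw [Nat.choose_two_right, show 4 * (j + 1) - 1 = 4 * j + 3 by omega,
      show 4 * (j + 1) * (4 * j + 3) = 2 * (2 * ((j + 1) * (4 * j + 3))) by ring,
      Nat.mul_div_cancel_left _ (by norm_num : 0 < 2)]
  rw [h1, castEven]

lemma par4 (k : ℕ) (hk : 1 ≤ k) : (((4 * k - 1).choose 2 : ℕ) : ZMod 2) = 1 := by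
  obtain ⟨j, rfl⟩ : ∃ j, k = j + 1 := ⟨k - 1, by omega⟩
  have h : (4 * (j + 1) - 1).choose 2 = 2 * (4 * j * j + 5 * j + 1) + 1 := by
    rw [show 4 * (j + 1) - 1 = 4 * j + 3 by omega, Nat.choose_two_right]
    have h1 : (4 * j + 3) * (4 * j + 3 - 1) = 2 * (2 * (4 * j * j + 5 * j + 1) + 1) := by
      rw [show 4 * j + 3 - 1 = 4 * j + 2 by omega]; ring
    rw [h1, Nat.mul_div_cancel_left _ (by norm_num : 0 < 2)]
  rw [h, castOdd]

lemma construction (k : ℕ) (hk : 1 ≤ k) (n : ℕ) (hn : (4 * k + 3) * (2 * k + 2) ≤ n) :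
    ∃ F : Finset (Finset (Fin n)), SatisfiesPattern n 4 ![0, 0, 0, 1] F ∧ F.card = 4 * k + 3 := by
  classical
  have hn0 : 0 < n := lt_of_lt_of_le (by positivity) hn
  set m := 4 * k + 3 with hm
  let Gs : Fin m → Finset (Finset (Fin m)) := fun a =>
    ((univ.powersetCard 2).filter (fun P => a ∉ P)) ∪ {{a}}
  have hsing : ∀ a b : Fin m, ({a} : Finset (Fin m)) ∈ Gs b ↔ a = b := by
    intro a b
    simp only [Gs, Finset.mem_union, Finset.mem_filter, Finset.mem_powersetCard,
      Finset.mem_singleton]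
    constructor
    · rintro (⟨⟨-, hcard⟩, -⟩ | h)
      · simp at hcard
      · exact Finset.singleton_inj.mp h
    · rintro rfl; right; rfl
  have hGsinj : Function.Injective Gs := by
    intro a b hab
    have : ({a} : Finset (Fin m)) ∈ Gs b := hab ▸ (hsing a a).mpr rfl
    exact (hsing a b).mp this
  let G : Finset (Finset (Finset (Fin m))) := univ.image Gs
  have hGcard : G.card = m := by
    rw [Finset.card_image_of_injective _ hGsinj, Finset.card_univ, Fintype.card_fin]
  -- ground set size bound
  have hWsub : G.sup id ⊆ (univ.powersetCard 2) ∪ univ.image (fun a : Fin m => ({a} : Finset (Fin m))) := by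
    show G.sup id ≤ _
    apply Finset.sup_le
    intro A hA
    simp only [id_eq, Finset.le_eq_subset]
    obtain ⟨a, -, rfl⟩ := Finset.mem_image.mp hA
    apply Finset.union_subset_union
    · exact Finset.filter_subset _ _
    · intro x hx
      rw [Finset.mem_singleton] at hx
      exact Finset.mem_image.mpr ⟨a, Finset.mem_univ a, hx.symm⟩
  have hchoose : (univ : Finset (Fin m)).card.choose 2 = (4 * k + 3) * (2 * k + 1) := by
    rw [Finset.card_univ, Fintype.card_fin, hm, Nat.choose_two_right,
      show 4 * k + 3 - 1 = 4 * k + 2 by omega,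
      show (4 * k + 3) * (4 * k + 2) = 2 * ((4 * k + 3) * (2 * k + 1)) by ring,
      Nat.mul_div_cancel_left _ (by norm_num : 0 < 2)]
  have hW : (G.sup id).card ≤ n := by
    refine le_trans (le_trans (Finset.card_le_card hWsub) (Finset.card_union_le _ _)) ?_
    refine le_trans (add_le_add (le_of_eq (Finset.card_powersetCard 2 univ))
      Finset.card_image_le) ?_
    rw [hchoose, Finset.card_univ, Fintype.card_fin]
    calc (4 * k + 3) * (2 * k + 1) + (4 * k + 3) = (4 * k + 3) * (2 * k + 2) := by ring
    _ ≤ n := hn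
  -- intersection computations
  have inf_singleton_card : ∀ a : Fin m, (Gs a).card = (4 * k + 2).choose 2 + 1 := by
    intro a
    have hdisj : Disjoint ((univ.powersetCard 2).filter (fun P => a ∉ P))
        ({{a}} : Finset (Finset (Fin m))) := by
      rw [Finset.disjoint_singleton_right, Finset.mem_filter, Finset.mem_powersetCard]
      rintro ⟨⟨-, hcard⟩, -⟩
      simp at hcard
    have hfil : (univ.powersetCard 2).filter (fun P => a ∉ P)
        = (univ.erase a).powersetCard 2 := by
      ext P
      simp only [Finset.mem_filter, Finset.mem_powersetCard, Finset.subset_erase]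
      tauto
    show (((univ.powersetCard 2).filter (fun P => a ∉ P)) ∪ {{a}}).card = _
    rw [Finset.card_union_of_disjoint hdisj, hfil, Finset.card_powersetCard,
      Finset.card_singleton, Finset.card_erase_of_mem (Finset.mem_univ a),
      Finset.card_univ, Fintype.card_fin, show m - 1 = 4 * k + 2 by omega]
  have inf_big : ∀ T' : Finset (Fin m), 2 ≤ T'.card →
      T'.inf Gs = (univ \ T').powersetCard 2 := by
    intro T' hT2
    ext x
    rw [mem_inf_finset]
    simp only [Finset.mem_powersetCard, Finset.subset_sdiff, Finset.subset_univ, true_and,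
      Finset.disjoint_right]
    constructor
    · intro h
      have hforms : ∀ a ∈ T', (x.card = 2 ∧ a ∉ x) ∨ x = {a} := by
        intro a ha
        have := h a ha
        simp only [Gs, Finset.mem_union, Finset.mem_filter, Finset.mem_powersetCard,
          Finset.mem_singleton] at this
        tauto
      have hcard2 : ∀ a ∈ T', x.card = 2 ∧ a ∉ x := by
        intro a ha
        rcases hforms a ha with h1 | h1
        · exact h1
        · exfalso
          obtain ⟨b, hb, hba⟩ := Finset.exists_mem_ne (s := T') (by omega) a
          rcases hforms b hb with h2 | h2
          · rw [h1] at h2; simp at h2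
          · rw [h1] at h2
            exact hba (Finset.singleton_inj.mp h2.symm)
      obtain ⟨a, ha⟩ := Finset.card_pos.mp (by omega : 0 < T'.card)
      refine ⟨fun b hb hbx => (hcard2 b hb).2 hbx, (hcard2 a ha).1⟩
    · rintro ⟨hdisj, hcard⟩
      intro a ha
      simp only [Gs, Finset.mem_union, Finset.mem_filter, Finset.mem_powersetCard]
      left
      exact ⟨⟨Finset.subset_univ x, hcard⟩, fun hax => hdisj ha hax⟩
  -- apply transfer
  obtain ⟨F, hFcard, hFspec⟩ := transfer n hn0 G hW
  refine ⟨F, ?_, by rw [hFcard, hGcard]⟩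
  intro i S hSF hScard
  have hSne : S.Nonempty := Finset.card_pos.mp (by omega)
  obtain ⟨T, hTG, hTcard, hcardeq⟩ := hFspec S hSF hSne
  obtain ⟨T', hT'sub, hT'⟩ := Finset.subset_image_iff.mp hTG
  have hT'card : T'.card = i.val + 1 := by
    rw [← hScard, ← hTcard, ← hT', Finset.card_image_of_injective _ hGsinj]
  have hinfT : T.inf id = T'.inf Gs := by
    rw [← hT', Finset.inf_image]
    rfl
  rw [hcardeq, hinfT]
  obtain ⟨iv, hiv⟩ := i
  simp only at hT'card ⊢
  interval_cases iv
  · -- singleton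
    obtain ⟨a, rfl⟩ := Finset.card_eq_one.mp (by simpa using hT'card)
    rw [Finset.inf_singleton, inf_singleton_card a]
    rw [par1 k]
    rfl
  · rw [inf_big T' (by omega), Finset.card_powersetCard, Finset.card_sdiff_of_subset (Finset.subset_univ _),
      Finset.card_univ, Fintype.card_fin, hT'card]
    rw [show m - (1 + 1) = 4 * k + 1 by omega, par2 k]
    rfl
  · rw [inf_big T' (by omega), Finset.card_powersetCard, Finset.card_sdiff_of_subset (Finset.subset_univ _),
      Finset.card_univ, Fintype.card_fin, hT'card]
    rw [show m - (2 + 1) = 4 * k by omega, par3 k]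
    rfl
  · rw [inf_big T' (by omega), Finset.card_powersetCard, Finset.card_sdiff_of_subset (Finset.subset_univ _),
      Finset.card_univ, Fintype.card_fin, hT'card]
    rw [show m - (3 + 1) = 4 * k - 1 by omega, par4 k hk]
    rfl

lemma pattern_empty (n : ℕ) :
    SatisfiesPattern n 4 ![0,0,0,1] (∅ : Finset (Finset (Fin n))) := by
  intro i S hS hcard
  rw [Finset.subset_empty] at hS
  subst hS
  rw [Finset.card_empty] at hcard
  omega


lemma bddPattern (n : ℕ) :
    BddAbove {m : ℕ | ∃ F : Finset (Finset (Fin n)),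
      SatisfiesPattern n 4 ![0,0,0,1] F ∧ F.card = m} := by
  refine ⟨Fintype.card (Finset (Fin n)), ?_⟩
  rintro m ⟨F, -, rfl⟩
  exact F.card_le_univ

lemma maxPattern_mem (n : ℕ) : ∃ F : Finset (Finset (Fin n)),
    SatisfiesPattern n 4 ![0,0,0,1] F ∧ F.card = maxPattern 4 ![0,0,0,1] n := by
  have hne : {m : ℕ | ∃ F : Finset (Finset (Fin n)),
      SatisfiesPattern n 4 ![0,0,0,1] F ∧ F.card = m}.Nonempty :=
    ⟨0, ⟨∅, pattern_empty n, Finset.card_empty⟩⟩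
  exact Nat.sSup_mem hne (bddPattern n)

lemma maxPattern_ge (n k : ℕ) (hk : 1 ≤ k) (hn : (4 * k + 3) * (2 * k + 2) ≤ n) :
    4 * k + 3 ≤ maxPattern 4 ![0,0,0,1] n := by
  obtain ⟨F, hF, hc⟩ := construction k hk n hn
  exact le_csSup (bddPattern n) ⟨F, hF, hc⟩

lemma ub_real (n : ℕ) :
    (maxPattern 4 ![0,0,0,1] n : ℝ) ≤ Real.sqrt (2 * n) + 4 := by
  set M := maxPattern 4 ![0,0,0,1] n with hMdef
  have hsq := Real.sqrt_nonneg (2 * (n:ℝ))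
  rcases le_or_gt M 4 with hM | hM
  · have : (M : ℝ) ≤ 4 := by exact_mod_cast hM
    linarith
  · obtain ⟨F, hF, hc⟩ := maxPattern_mem n
    have hup := upper n F hF
    rw [← hMdef] at hc
    rw [hc] at hup
    have heven : 2 ∣ M * (M - 1) := by
      have := Nat.even_mul_succ_self (M - 1)
      rw [show M - 1 + 1 = M by omega, mul_comm] at this
      exact (Even.two_dvd this)
    have h2c : M * (M - 1) = 2 * M.choose 2 := by
      rw [Nat.choose_two_right, Nat.mul_div_cancel' heven]
    have key : M * (M - 1) ≤ 2 * (n + M + 1) := by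
      rw [h2c]; omega
    obtain ⟨a, ha⟩ : ∃ a, M = a + 4 := ⟨M - 4, by omega⟩
    have ha1 : 1 ≤ a := by omega
    have hexp : (a + 4) * (a + 4 - 1) = a * a + 7 * a + 12 := by
      rw [show a + 4 - 1 = a + 3 by omega]; ring
    rw [ha, hexp] at key
    have haa : a * a ≤ 2 * n := by omega
    have haR : (a : ℝ) ≤ Real.sqrt (2 * n) := by
      rw [Real.le_sqrt (by positivity) (by positivity)]
      have : ((a * a : ℕ) : ℝ) ≤ ((2 * n : ℕ) : ℝ) := Nat.cast_le.mpr haa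
      push_cast at this ⊢
      nlinarith
    have : (M : ℝ) = (a : ℝ) + 4 := by exact_mod_cast congrArg (Nat.cast (R := ℝ)) ha
    linarith

lemma lb_real (n : ℕ) (hn : 61 ≤ n) :
    Real.sqrt (2 * n) - 8 ≤ (maxPattern 4 ![0,0,0,1] n : ℝ) := by
  set s := Nat.sqrt (2 * n) with hsdef
  have hs11 : 11 ≤ s := by
    rw [hsdef, Nat.le_sqrt]
    omega
  set k := (s - 7) / 4 with hkdef
  have hk1 : 1 ≤ k := by omega
  have hprod : (4 * k + 3) * (2 * k + 2) ≤ n := by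
    have h1 : 4 * k + 4 ≤ s := by omega
    have h2 : (4 * k + 3) * (4 * k + 4) ≤ s * s := Nat.mul_le_mul (by omega) h1
    have h3 : s * s ≤ 2 * n := by
      have := Nat.sqrt_le' (2 * n)
      rw [pow_two] at this
      exact this
    have h4 : (4 * k + 3) * (4 * k + 4) = 2 * ((4 * k + 3) * (2 * k + 2)) := by ring
    have h5 : 2 * ((4 * k + 3) * (2 * k + 2)) ≤ 2 * n := by omega
    omega
  have hge := maxPattern_ge n k hk1 hprod
  have hMs : s ≤ maxPattern 4 ![0,0,0,1] n + 7 := by omega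
  have hsR : Real.sqrt (2 * n) - 1 ≤ (s : ℝ) := by
    have hlt : (2 * n : ℝ) < ((s : ℝ) + 1) ^ 2 := by
      have := Nat.lt_succ_sqrt (2 * n)
      have hc : ((2 * n : ℕ) : ℝ) < (((s + 1) * (s + 1) : ℕ) : ℝ) := Nat.cast_lt.mpr this
      push_cast at hc
      nlinarith
    have := (Real.sqrt_lt' (by positivity : (0:ℝ) < (s:ℝ) + 1)).mpr hlt
    linarith
  have hMsR : (s : ℝ) ≤ (maxPattern 4 ![0,0,0,1] n : ℝ) + 7 := by exact_mod_cast hMs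
  linarith

theorem f_0001_asymp :
    Filter.Tendsto (fun n : ℕ => (maxPattern 4 ![0, 0, 0, 1] n : ℝ) / Real.sqrt (2 * n))
      Filter.atTop (nhds 1) := by
  have hsq : Filter.Tendsto (fun n : ℕ => Real.sqrt (2 * n)) Filter.atTop Filter.atTop := by
    rw [Filter.tendsto_atTop_atTop]
    intro b
    refine ⟨⌈b ^ 2⌉₊ + 1, fun a ha => ?_⟩
    rcases le_or_gt b 0 with hb | hb
    · exact le_trans hb (Real.sqrt_nonneg _)
    · have h1 : b ^ 2 ≤ (⌈b ^ 2⌉₊ : ℝ) := Nat.le_ceil _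
      have h2 : ((⌈b ^ 2⌉₊ : ℕ) : ℝ) ≤ (a : ℝ) := Nat.cast_le.mpr (by omega)
      have h3 : (0 : ℝ) ≤ (a : ℝ) := Nat.cast_nonneg a
      exact (Real.le_sqrt hb.le (by positivity)).mpr (by linarith)
  have h8 : Filter.Tendsto (fun n : ℕ => 8 / Real.sqrt (2 * n)) Filter.atTop (nhds 0) :=
    Filter.Tendsto.div_atTop tendsto_const_nhds hsq
  have h4 : Filter.Tendsto (fun n : ℕ => 4 / Real.sqrt (2 * n)) Filter.atTop (nhds 0) :=
    Filter.Tendsto.div_atTop tendsto_const_nhds hsq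
  have hg : Filter.Tendsto (fun n : ℕ => 1 - 8 / Real.sqrt (2 * n)) Filter.atTop (nhds 1) := by
    have := (tendsto_const_nhds :
      Filter.Tendsto (fun _ : ℕ => (1:ℝ)) Filter.atTop (nhds 1)).sub h8
    simpa using this
  have hh : Filter.Tendsto (fun n : ℕ => 1 + 4 / Real.sqrt (2 * n)) Filter.atTop (nhds 1) := by
    have := (tendsto_const_nhds :
      Filter.Tendsto (fun _ : ℕ => (1:ℝ)) Filter.atTop (nhds 1)).add h4
    simpa using this
  refine tendsto_of_tendsto_of_tendsto_of_le_of_le' hg hh ?_ ?_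
  · filter_upwards [Filter.eventually_ge_atTop 61] with n hn
    have hn0 : (0:ℝ) < (n:ℝ) := by exact_mod_cast (by omega : 0 < n)
    have hpos : 0 < Real.sqrt (2 * n) := Real.sqrt_pos.mpr (by linarith)
    have hlb := lb_real n hn
    have heq : 1 - 8 / Real.sqrt (2 * n) = (Real.sqrt (2 * n) - 8) / Real.sqrt (2 * n) := by
      rw [sub_div, div_self hpos.ne']
    rw [heq]
    exact (div_le_div_iff_of_pos_right hpos).mpr hlb
  · filter_upwards [Filter.eventually_ge_atTop 61] with n hn
    have hn0 : (0:ℝ) < (n:ℝ) := by exact_mod_cast (by omega : 0 < n)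
    have hpos : 0 < Real.sqrt (2 * n) := Real.sqrt_pos.mpr (by linarith)
    have hub := ub_real n
    have heq : 1 + 4 / Real.sqrt (2 * n) = (Real.sqrt (2 * n) + 4) / Real.sqrt (2 * n) := by
      rw [add_div, div_self hpos.ne']
    rw [heq]
    exact (div_le_div_iff_of_pos_right hpos).mpr hub
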